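/- The Lovász extension f⁻ of a submodular function f satisfies f⁻(c·x) ≥ c·f⁻(x) for every x ∈ [0,1]^V and every constant c ∈ [0,1]. -/
import Mathlib
open MeasureTheory Finset

lemma meas_aux {V : Type*} [Fintype V] [DecidableEq V]
    (f : Finset V → ℝ) (y : V → ℝ) :
    Measurable (fun θ : ℝ => f (Finset.univ.filter (fun i => θ ≤ y i))) := by
  letI : MeasurableSpace (Finset V) := ⊤
  haveI : MeasurableSingletonClass (Finset V) := ⟨fun _ => trivial⟩
  have h1 : Measurable (fun θ : ℝ => Finset.univ.filter (fun i => θ ≤ y i)) := by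
    apply measurable_to_countable'
    intro S
    have : (fun θ : ℝ => Finset.univ.filter (fun i => θ ≤ y i)) ⁻¹' {S}
        = ⋂ i : V, {θ : ℝ | θ ≤ y i ↔ i ∈ S} := by
      ext θ
      simp [Set.mem_preimage, Finset.ext_iff, Finset.mem_filter]
    rw [this]
    refine MeasurableSet.iInter fun i => ?_
    by_cases hiS : i ∈ S
    · have : {θ : ℝ | θ ≤ y i ↔ i ∈ S} = Set.Iic (y i) := by ext; simp [hiS]
      rw [this]; exact measurableSet_Iic
    · have : {θ : ℝ | θ ≤ y i ↔ i ∈ S} = Set.Ioi (y i) := by ext; simp [hiS, not_le]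
      rw [this]; exact measurableSet_Ioi
  exact (measurable_from_top (f := f)).comp h1

lemma int_aux {V : Type*} [Fintype V] [DecidableEq V]
    (f : Finset V → ℝ) (y : V → ℝ) :
    IntegrableOn (fun θ : ℝ => f (Finset.univ.filter (fun i => θ ≤ y i)))
      (Set.Ioo (0:ℝ) 1) := by
  apply Measure.integrableOn_of_bounded
    (M := (Finset.univ : Finset (Finset V)).sup' ⟨∅, Finset.mem_univ _⟩ (fun S => |f S|))
  · simp [Real.volume_Ioo]
  · exact (meas_aux f y).aestronglyMeasurable
  · filter_upwards with θ
    exact Finset.le_sup' (fun S => |f S|) (Finset.mem_univ _)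

/-- A set function is submodular. -/
def Submodular {V : Type*} [DecidableEq V] (f : Finset V → ℝ) : Prop :=
  ∀ A B : Finset V, f (A ∪ B) + f (A ∩ B) ≤ f A + f B

/-- The Lovász extension: expectation over a uniform threshold θ ∈ (0,1). -/
noncomputable def lovasz {V : Type*} [Fintype V] [DecidableEq V]
    (f : Finset V → ℝ) (x : V → ℝ) : ℝ :=
  ∫ θ in Set.Ioo (0:ℝ) 1, f (Finset.univ.filter (fun i => θ ≤ x i))

/-- Characteristic vector of a finite set. -/
def charVec {V : Type*} [DecidableEq V] (S : Finset V) : V → ℝ :=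
  fun i => if i ∈ S then 1 else 0

/-- The Lovász extension satisfies `f⁻(c • x) ≥ c * f⁻(x)` for `c ∈ [0,1]`. -/
theorem lovasz_smul_le {V : Type*} [Fintype V] [DecidableEq V]
    (f : Finset V → ℝ) (hf : Submodular f) (hnn : ∀ A : Finset V, 0 ≤ f A)
    (x : V → ℝ) (hx : ∀ i, x i ∈ Set.Icc (0:ℝ) 1)
    (c : ℝ) (hc : c ∈ Set.Icc (0:ℝ) 1) :
    c * lovasz f x ≤ lovasz f (c • x) := by
  obtain ⟨hc0, hc1⟩ := hc
  rcases eq_or_lt_of_le hc0 with h0 | h0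
  · rw [← h0, zero_mul]
    exact setIntegral_nonneg measurableSet_Ioo fun θ _ => hnn _
  · -- c > 0
    have key : (fun θ : ℝ => f (Finset.univ.filter (fun i => θ ≤ (c • x) i)))
        = fun θ : ℝ => f (Finset.univ.filter (fun i => c⁻¹ * θ ≤ x i)) := by
      funext θ
      congr 1
      ext i
      simp only [Finset.mem_filter, Pi.smul_apply, smul_eq_mul]
      rw [inv_mul_le_iff₀ h0]
    have hmono : ∫ θ in Set.Ioo (0:ℝ) c, f (Finset.univ.filter (fun i => θ ≤ (c • x) i))
        ≤ lovasz f (c • x) := by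
      apply setIntegral_mono_set (int_aux f (c • x))
      · filter_upwards with θ using hnn _
      · filter_upwards with θ hθ using Set.Ioo_subset_Ioo le_rfl hc1 hθ
    refine le_trans (le_of_eq ?_) hmono
    have h1 : ∫ θ in Set.Ioo (0:ℝ) c, f (Finset.univ.filter (fun i => θ ≤ (c • x) i))
        = ∫ θ in (0:ℝ)..c, f (Finset.univ.filter (fun i => c⁻¹ * θ ≤ x i)) := by
      rw [key, intervalIntegral.integral_of_le hc0, integral_Ioc_eq_integral_Ioo]
    rw [h1, intervalIntegral.integral_comp_mul_left
      (fun t => f (Finset.univ.filter (fun i => t ≤ x i))) (inv_ne_zero (ne_of_gt h0))]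
    simp only [mul_zero, inv_inv, inv_mul_cancel₀ (ne_of_gt h0), smul_eq_mul]
    congr 1
    rw [lovasz, ← integral_Ioc_eq_integral_Ioo, ← intervalIntegral.integral_of_le zero_le_one]
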